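/- Let A be an n×n complex matrix, u, v ∈ ℂⁿ, and suppose there exists κ ≥ 0 with v*u = ⋯ = v*A^{κ−1}u = 0. Let τ ∈ ℂ be nonzero and let λ be an eigenvalue of B(τ) = A + τ u v* that is not an eigenvalue of A and satisfies |λ| > ‖A‖. Then λ^{κ+1}/τ = ∑_{j=0}^∞ λ^{−j} v*A^{κ+j}u, where the series converges absolutely. -/

import Mathlib

open Matrix

set_option maxHeartbeats 2000000 in
theorem stmt9 {n : ℕ} (A : Matrix (Fin n) (Fin n) ℂ) (u v : Fin n → ℂ) (κ : ℕ)
    (h0 : ∀ j < κ, star v ⬝ᵥ (A ^ j).mulVec u = 0) (τ : ℂ) (hτ : τ ≠ 0) (lam : ℂ)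
    (hB : lam ∈ spectrum ℂ (A + τ • vecMulVec u (star v)))
    (hA : lam ∉ spectrum ℂ A)
    (hnorm : ‖Matrix.toEuclideanCLM (𝕜 := ℂ) A‖ < ‖lam‖) :
    HasSum (fun j : ℕ => lam ^ (-(j : ℤ)) * (star v ⬝ᵥ (A ^ (κ + j)).mulVec u))
        (lam ^ (κ + 1) / τ) ∧
      Summable (fun j : ℕ => ‖lam ^ (-(j : ℤ)) * (star v ⬝ᵥ (A ^ (κ + j)).mulVec u)‖) := by
  classical
  set a : EuclideanSpace ℂ (Fin n) →L[ℂ] EuclideanSpace ℂ (Fin n) := Matrix.toEuclideanCLM (𝕜 := ℂ) A with ha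
  have hlampos : 0 < ‖lam‖ := lt_of_le_of_lt (norm_nonneg _) hnorm
  have hlam0 : lam ≠ 0 := by simpa using hlampos.ne'
  -- the geometric series
  set t : EuclideanSpace ℂ (Fin n) →L[ℂ] EuclideanSpace ℂ (Fin n) :=
    Matrix.toEuclideanCLM (𝕜 := ℂ) (lam⁻¹ • A) with htdef
  have htsmul : t = lam⁻¹ • a := by rw [htdef, _root_.map_smul, ha]
  have ht : ‖t‖ < 1 := by
    refine lt_of_le_of_lt (htsmul ▸ ContinuousLinearMap.opNorm_smul_le lam⁻¹ a) ?_
    rw [norm_inv, inv_mul_eq_div]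
    exact (div_lt_one hlampos).mpr hnorm
  have hsum : Summable (fun j : ℕ => t ^ j) := summable_geometric_of_norm_lt_one ht
  set S : EuclideanSpace ℂ (Fin n) →L[ℂ] EuclideanSpace ℂ (Fin n) := ∑' j : ℕ, t ^ j with hSdef
  -- the matrix M = lam • 1 - A is invertible
  set M : Matrix (Fin n) (Fin n) ℂ := lam • 1 - A with hMdef
  have hMunit : IsUnit M := by
    have := spectrum.notMem_iff.mp hA
    rwa [Algebra.algebraMap_eq_smul_one] at this
  have hdet : IsUnit M.det := (isUnit_iff_isUnit_det M).mp hMunit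
  -- key scalar identity from the eigenvalue condition
  have hBkey : star v ⬝ᵥ M⁻¹ *ᵥ u = τ⁻¹ := by
    have h1 : ¬ IsUnit (lam • (1 : Matrix (Fin n) (Fin n) ℂ)
        - (A + τ • vecMulVec u (star v))) := by
      have := spectrum.mem_iff.mp hB
      rwa [Algebra.algebraMap_eq_smul_one] at this
    have hsv : M * (τ • vecMulVec (M⁻¹ *ᵥ u) (star v)) = τ • vecMulVec u (star v) := by
      rw [Matrix.mul_smul]
      congr 1
      rw [vecMulVec_eq Unit, vecMulVec_eq Unit, ← Matrix.mul_assoc, ← Matrix.replicateCol_mulVec,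
        Matrix.mulVec_mulVec, Matrix.mul_nonsing_inv M hdet, Matrix.one_mulVec]
    have hfact : lam • (1 : Matrix (Fin n) (Fin n) ℂ) - (A + τ • vecMulVec u (star v))
        = M * (1 - τ • vecMulVec (M⁻¹ *ᵥ u) (star v)) := by
      rw [Matrix.mul_sub, Matrix.mul_one, hsv, hMdef, sub_sub]
    rw [hfact] at h1
    have h2 : ¬ IsUnit (1 - τ • vecMulVec (M⁻¹ *ᵥ u) (star v)) := fun h => h1 (hMunit.mul h)
    have h3 : (1 - τ • vecMulVec (M⁻¹ *ᵥ u) (star v)).det = 0 := by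
      by_contra hne
      exact h2 ((isUnit_iff_isUnit_det _).mpr (isUnit_iff_ne_zero.mpr hne))
    have h5 : (1 : Matrix (Fin n) (Fin n) ℂ) - τ • vecMulVec (M⁻¹ *ᵥ u) (star v)
        = 1 + Matrix.replicateCol Unit (-(τ • (M⁻¹ *ᵥ u))) * Matrix.replicateRow Unit (star v) := by
      rw [← vecMulVec_eq Unit, sub_eq_add_neg]
      congr 1
      ext i j
      simp [vecMulVec, mul_assoc]
    rw [h5, Matrix.det_one_add_replicateCol_mul_replicateRow] at h3
    have h6 : star v ⬝ᵥ -(τ • (M⁻¹ *ᵥ u)) = -(τ * (star v ⬝ᵥ M⁻¹ *ᵥ u)) := by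
      rw [dotProduct_neg, dotProduct_smul, smul_eq_mul]
    rw [h6] at h3
    have h7 : τ * (star v ⬝ᵥ M⁻¹ *ᵥ u) = 1 := by linear_combination -h3
    exact eq_inv_of_mul_eq_one_left (by linear_combination h7)
  -- identify the CLM image of M⁻¹ with lam⁻¹ • S
  have hMa : Matrix.toEuclideanCLM (𝕜 := ℂ) M = lam • ((1 : EuclideanSpace ℂ (Fin n) →L[ℂ] EuclideanSpace ℂ (Fin n)) - t) := by
    rw [hMdef, _root_.map_sub, _root_.map_smul, _root_.map_one, smul_sub, htsmul, smul_smul,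
      mul_inv_cancel₀ hlam0, one_smul, ha]
  have hMinv : Matrix.toEuclideanCLM (𝕜 := ℂ) M⁻¹ = lam⁻¹ • S := by
    have h2 : Matrix.toEuclideanCLM (𝕜 := ℂ) M * Matrix.toEuclideanCLM (𝕜 := ℂ) M⁻¹ = 1 := by
      rw [← _root_.map_mul, Matrix.mul_nonsing_inv M hdet, _root_.map_one]
    have h3 : Matrix.toEuclideanCLM (𝕜 := ℂ) M * (lam⁻¹ • S) = 1 := by
      rw [hMa, smul_mul_assoc, mul_smul_comm, smul_smul, mul_inv_cancel₀ hlam0, one_smul,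
        hSdef, mul_neg_geom_series t ht]
    have hu : IsUnit (Matrix.toEuclideanCLM (𝕜 := ℂ) M) := hMunit.map _
    obtain ⟨w, hw⟩ := hu
    calc Matrix.toEuclideanCLM (𝕜 := ℂ) M⁻¹
        = ↑w⁻¹ * (↑w * Matrix.toEuclideanCLM (𝕜 := ℂ) M⁻¹) := by
          rw [← mul_assoc, Units.inv_mul, one_mul]
      _ = ↑w⁻¹ * (↑w * (lam⁻¹ • S)) := by rw [hw, h2, h3]
      _ = lam⁻¹ • S := by rw [← mul_assoc, Units.inv_mul, one_mul]
  -- the continuous linear functional x ↦ ⟪v', x u'⟫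
  set u' : EuclideanSpace ℂ (Fin n) := (WithLp.equiv 2 (Fin n → ℂ)).symm u with hu'
  set v' : EuclideanSpace ℂ (Fin n) := (WithLp.equiv 2 (Fin n → ℂ)).symm v with hv'
  set φ : (EuclideanSpace ℂ (Fin n) →L[ℂ] EuclideanSpace ℂ (Fin n)) →L[ℂ] ℂ :=
    (innerSL ℂ v').comp (ContinuousLinearMap.apply ℂ (EuclideanSpace ℂ (Fin n)) u') with hφdef
  have hφ : ∀ N : Matrix (Fin n) (Fin n) ℂ,
      φ (Matrix.toEuclideanCLM (𝕜 := ℂ) N) = star v ⬝ᵥ N *ᵥ u := by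
    intro N
    rw [hφdef]
    simp only [ContinuousLinearMap.comp_apply, ContinuousLinearMap.apply_apply, innerSL_apply_apply]
    rw [hu', hv', WithLp.equiv_symm_apply, Matrix.toEuclideanCLM_toLp,
      EuclideanSpace.inner_toLp_toLp, dotProduct_comm]
  have hφsum : HasSum (fun j : ℕ => φ (t ^ j)) (φ S) := hsum.hasSum.mapL φ
  have hterm : ∀ j : ℕ, φ (t ^ j) = lam⁻¹ ^ j * (star v ⬝ᵥ (A ^ j) *ᵥ u) := by
    intro j
    have h1 : t ^ j = Matrix.toEuclideanCLM (𝕜 := ℂ) (lam⁻¹ ^ j • A ^ j) := by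
      rw [htdef, ← _root_.map_pow, smul_pow]
    rw [h1, hφ, Matrix.smul_mulVec, dotProduct_smul, smul_eq_mul]
  have hφS : φ S = lam * τ⁻¹ := by
    have h1 : φ (lam⁻¹ • S) = τ⁻¹ := by rw [← hMinv, hφ, hBkey]
    rw [φ.map_smul, smul_eq_mul] at h1
    rw [inv_mul_eq_iff_eq_mul₀ hlam0] at h1
    exact h1
  rw [funext hterm, hφS] at hφsum
  -- drop the first κ (vanishing) terms
  have hzero : ∀ i ∈ Finset.range κ, lam⁻¹ ^ i * (star v ⬝ᵥ (A ^ i) *ᵥ u) = 0 := by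
    intro i hi
    rw [h0 i (Finset.mem_range.mp hi), mul_zero]
  have hg2 : HasSum (fun j : ℕ => lam⁻¹ ^ (j + κ) * (star v ⬝ᵥ (A ^ (j + κ)) *ᵥ u))
      (lam * τ⁻¹ - ∑ i ∈ Finset.range κ, lam⁻¹ ^ i * (star v ⬝ᵥ (A ^ i) *ᵥ u)) :=
    (hasSum_nat_add_iff' κ).mpr hφsum
  rw [Finset.sum_eq_zero hzero, sub_zero] at hg2
  have hg3 := hg2.mul_left (lam ^ κ)
  have hkey : (fun j : ℕ => lam ^ κ * (lam⁻¹ ^ (j + κ) * (star v ⬝ᵥ (A ^ (j + κ)) *ᵥ u)))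
      = fun j : ℕ => lam ^ (-(j : ℤ)) * (star v ⬝ᵥ (A ^ (κ + j)).mulVec u) := by
    funext j
    rw [add_comm j κ, pow_add, _root_.zpow_neg, zpow_natCast, ← inv_pow]
    rw [← mul_assoc, ← mul_assoc, ← mul_pow, mul_inv_cancel₀ hlam0, one_pow, one_mul]
  have hval : lam ^ κ * (lam * τ⁻¹) = lam ^ (κ + 1) / τ := by
    rw [pow_succ, div_eq_mul_inv]; ring
  rw [hkey, hval] at hg3
  refine ⟨hg3, ?_⟩
  -- summability of norms, by comparison with a geometric series
  have hpow : ∀ m : ℕ, ‖a ^ m‖ ≤ ‖a‖ ^ m := by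
    intro m
    induction m with
    | zero =>
      rw [pow_zero, pow_zero, ContinuousLinearMap.one_def]
      exact ContinuousLinearMap.norm_id_le
    | succ k ih =>
      rw [pow_succ, pow_succ]
      exact le_trans (norm_mul_le _ _) (mul_le_mul_of_nonneg_right ih (norm_nonneg _))
  have hf_bound : ∀ m : ℕ, ‖star v ⬝ᵥ (A ^ m) *ᵥ u‖ ≤ ‖v'‖ * ‖u'‖ * ‖a‖ ^ m := by
    intro m
    have h1 : star v ⬝ᵥ (A ^ m) *ᵥ u = φ (a ^ m) := by
      rw [ha, ← _root_.map_pow, hφ]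
    rw [h1, hφdef]
    simp only [ContinuousLinearMap.comp_apply, ContinuousLinearMap.apply_apply, innerSL_apply_apply]
    calc ‖(inner ℂ v' ((a ^ m) u') : ℂ)‖ ≤ ‖v'‖ * ‖(a ^ m) u'‖ := norm_inner_le_norm _ _
      _ ≤ ‖v'‖ * (‖a ^ m‖ * ‖u'‖) :=
          mul_le_mul_of_nonneg_left ((a ^ m).le_opNorm u') (norm_nonneg _)
      _ ≤ ‖v'‖ * (‖a‖ ^ m * ‖u'‖) := by
          have := mul_le_mul_of_nonneg_right (hpow m) (norm_nonneg u')
          exact mul_le_mul_of_nonneg_left this (norm_nonneg _)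
      _ = ‖v'‖ * ‖u'‖ * ‖a‖ ^ m := by ring
  set r : ℝ := ‖a‖ / ‖lam‖ with hrdef
  have hr0 : 0 ≤ r := div_nonneg (norm_nonneg _) (norm_nonneg _)
  have hr1 : r < 1 := (div_lt_one hlampos).mpr hnorm
  have hgeo : Summable (fun j : ℕ => (‖v'‖ * ‖u'‖ * ‖a‖ ^ κ) * r ^ j) :=
    (summable_geometric_of_lt_one hr0 hr1).mul_left _
  refine Summable.of_nonneg_of_le (fun j => norm_nonneg _) (fun j => ?_) hgeo
  rw [norm_mul, norm_zpow, _root_.zpow_neg, zpow_natCast]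
  calc (‖lam‖ ^ j)⁻¹ * ‖star v ⬝ᵥ (A ^ (κ + j)) *ᵥ u‖
      ≤ (‖lam‖ ^ j)⁻¹ * (‖v'‖ * ‖u'‖ * ‖a‖ ^ (κ + j)) := by
        exact mul_le_mul_of_nonneg_left (hf_bound (κ + j)) (by positivity)
    _ = (‖v'‖ * ‖u'‖ * ‖a‖ ^ κ) * r ^ j := by
        rw [hrdef, div_pow, pow_add, div_eq_mul_inv]
        ring
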